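/- Let G = (S, C, R) be a reaction network with a set of catalysts E ⊆ S (satisfying (C1) and (C2)) and let G* be the reduction of G by removal of E. Then G has no drainable siphons if and only if G* has no drainable siphons, and G has no self-replicable siphons if and only if G* has no self-replicable siphons. -/

import Mathlib

/-- A reaction network: a finite set of species, a finite set of complexes
(nonnegative vectors supported on the species), and a finite set of reactions
(a digraph on the complexes with no self-loops), such that every complex takes
part in some reaction and every species is part of some complex. -/
structure RN (ι : Type) where
  species : Finset ι
  complexes : Finset (ι → ℝ)
  reactions : Finset ((ι → ℝ) × (ι → ℝ))
  complexes_nonneg : ∀ y ∈ complexes, ∀ i, 0 ≤ y i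
  complexes_supp : ∀ y ∈ complexes, ∀ i, y i ≠ 0 → i ∈ species
  react_mem_fst : ∀ r ∈ reactions, r.1 ∈ complexes
  react_mem_snd : ∀ r ∈ reactions, r.2 ∈ complexes
  no_loops : ∀ r ∈ reactions, r.1 ≠ r.2
  complexes_used : ∀ y ∈ complexes, ∃ r ∈ reactions, r.1 = y ∨ r.2 = y
  species_used : ∀ i ∈ species, ∃ y ∈ complexes, y i ≠ 0

namespace RN

variable {ι : Type}

/-- A siphon: a nonempty set of species such that every reaction having a
product species in it also has a reactant species in it. -/
def IsSiphon (G : RN ι) (T : Set ι) : Prop :=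
  T.Nonempty ∧ T ⊆ ↑G.species ∧
    ∀ r ∈ G.reactions, (∃ i ∈ T, 0 < r.2 i) → ∃ i ∈ T, 0 < r.1 i

/-- A minimal siphon: a siphon not properly containing any other siphon. -/
def MinimalSiphon (G : RN ι) (T : Set ι) : Prop :=
  G.IsSiphon T ∧ ∀ T' : Set ι, G.IsSiphon T' → T' ⊆ T → T' = T

/-- A nonempty set of species is drainable if some finite sequence of reactions
(with repetitions allowed) strictly decreases every one of its coordinates. -/
def Drainable (G : RN ι) (T : Set ι) : Prop :=
  T.Nonempty ∧ T ⊆ ↑G.species ∧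
    ∃ L : List ((ι → ℝ) × (ι → ℝ)), (∀ r ∈ L, r ∈ G.reactions) ∧
      ∀ i ∈ T, (L.map (fun r => r.2 i - r.1 i)).sum < 0

/-- A nonempty set of species is self-replicable if some finite sequence of
reactions (with repetitions allowed) strictly increases every one of its
coordinates. -/
def SelfReplicable (G : RN ι) (T : Set ι) : Prop :=
  T.Nonempty ∧ T ⊆ ↑G.species ∧
    ∃ L : List ((ι → ℝ) × (ι → ℝ)), (∀ r ∈ L, r ∈ G.reactions) ∧
      ∀ i ∈ T, 0 < (L.map (fun r => r.2 i - r.1 i)).sum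

/-- A P-semiflow: a nonzero nonnegative vector supported on the species with
ωᵀN = 0, i.e. ω · (y' - y) = 0 for every reaction y → y'. -/
def IsPSemiflow (G : RN ι) (ω : ι → ℝ) : Prop :=
  (∀ i, 0 ≤ ω i) ∧ (∀ i, ω i ≠ 0 → i ∈ G.species) ∧ ω ≠ 0 ∧
    ∀ r ∈ G.reactions, ∑ i ∈ G.species, ω i * (r.2 i - r.1 i) = 0

/-- The siphon/P-semiflow property: every siphon contains the support of a
P-semiflow. -/
def SiphonPSemiflowProperty (G : RN ι) : Prop :=
  ∀ T : Set ι, G.IsSiphon T → ∃ ω : ι → ℝ, G.IsPSemiflow ω ∧ {i | 0 < ω i} ⊆ T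

/-- Consistency: there is a strictly positive T-semiflow, i.e. strictly
positive reaction weights v with N v = 0. -/
def Consistent (G : RN ι) : Prop :=
  ∃ v : ((ι → ℝ) × (ι → ℝ)) → ℝ, (∀ r ∈ G.reactions, 0 < v r) ∧
    ∀ i : ι, ∑ r ∈ G.reactions, v r * (r.2 i - r.1 i) = 0

/-- Conservativity: there is a strictly positive conservation law ω ≫ 0 with
ωᵀN = 0. -/
def Conservative (G : RN ι) : Prop :=
  ∃ ω : ι → ℝ, (∀ i ∈ G.species, 0 < ω i) ∧
    ∀ r ∈ G.reactions, ∑ i ∈ G.species, ω i * (r.2 i - r.1 i) = 0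

/-- A directed reaction path from `y` to `y'` all of whose non-endpoint
complexes lie in the set `A`. -/
def PathThrough (G : RN ι) (A : Set (ι → ℝ)) (y y' : ι → ℝ) : Prop :=
  ∃ L : List (ι → ℝ), (∀ z ∈ L, z ∈ A) ∧
    List.Chain (fun a b => (a, b) ∈ G.reactions) y (L ++ [y'])

end RN

variable {ι : Type}

/-- The complex consisting of the single species `j` (with unit coefficient),
for `j` in the given set. -/
def InterCplx [DecidableEq ι] (Y : Finset ι) (z : ι → ℝ) : Prop :=
  ∃ j ∈ Y, z = Pi.single j 1

/-- The complex `z` is supported off the set `Y`. -/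
def OffSet (Y : Finset ι) (z : ι → ℝ) : Prop := ∀ j ∈ Y, z j = 0

namespace RN

/-- `Y` is a set of intermediate species of `G`: (I1) every complex is either
supported off `Y` or equals a single species of `Y` with unit coefficient;
(I2) every `Y`-complex is connected to non-intermediate complexes by directed
reaction paths, in both directions, all of whose non-endpoints are
intermediates. -/
def IsIntermediateSet [DecidableEq ι] (G : RN ι) (Y : Finset ι) : Prop :=
  Y.Nonempty ∧ Y ⊆ G.species ∧
    (∀ y ∈ G.complexes, OffSet Y y ∨ InterCplx Y y) ∧
    (∀ j ∈ Y, ∃ y ∈ G.complexes, ∃ y' ∈ G.complexes, OffSet Y y ∧ OffSet Y y' ∧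
      G.PathThrough {z | InterCplx Y z} y (Pi.single j 1) ∧
      G.PathThrough {z | InterCplx Y z} (Pi.single j 1) y')

/-- `G'` is the reduction of `G` by removal of the set of intermediates `Y`:
its reactions are exactly the pairs `y → y'` of distinct non-intermediate
complexes of `G` joined by a directed reaction path all of whose non-endpoints
are intermediates (in particular all reactions of `G` between non-intermediate
complexes). -/
def IsIntermediateReduction [DecidableEq ι] (G : RN ι) (Y : Finset ι) (G' : RN ι) : Prop :=
  ∀ p : (ι → ℝ) × (ι → ℝ), p ∈ G'.reactions ↔
    (p.1 ∈ G.complexes ∧ p.2 ∈ G.complexes ∧ OffSet Y p.1 ∧ OffSet Y p.2 ∧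
      p.1 ≠ p.2 ∧ G.PathThrough {z | InterCplx Y z} p.1 p.2)

end RN

/-- The projection of a complex onto the coordinates outside `E` (the
coordinates in `E` are set to zero). -/
def projOff [DecidableEq ι] (E : Finset ι) (y : ι → ℝ) : ι → ℝ :=
  fun i => if i ∈ E then 0 else y i

namespace RN

/-- `E` is a set of catalysts of `G`, with `GE` the subnetwork of `G` implied
by `E`: (C1) every reaction either leaves the `E`-coordinates untouched or is
supported entirely in `E`; `GE` consists of the reactions of `G` involving
only species of `E`; and (C2) `GE` has no drainable and no self-replicable
siphons. -/
def IsCatalystSet (G GE : RN ι) (E : Finset ι) : Prop :=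
  E.Nonempty ∧ E ⊆ G.species ∧
    (∀ r ∈ G.reactions, (∀ i ∈ E, r.1 i = r.2 i) ∨ (∀ i, i ∉ E → r.1 i = 0 ∧ r.2 i = 0)) ∧
    (∀ p : (ι → ℝ) × (ι → ℝ), p ∈ GE.reactions ↔
      (p ∈ G.reactions ∧ (∀ i, p.1 i ≠ 0 → i ∈ E) ∧ (∀ i, p.2 i ≠ 0 → i ∈ E))) ∧
    (∀ T : Set ι, GE.IsSiphon T → ¬ GE.Drainable T ∧ ¬ GE.SelfReplicable T)

/-- `G'` is the reduction of `G` by removal of the set of catalysts `E`: its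
reactions are the projections off `E` of those reactions of `G` at least one
of whose projected sides is nonzero. -/
def IsCatalystReduction [DecidableEq ι] (G : RN ι) (E : Finset ι) (G' : RN ι) : Prop :=
  ∀ p : (ι → ℝ) × (ι → ℝ), p ∈ G'.reactions ↔
    ∃ r ∈ G.reactions, p = (projOff E r.1, projOff E r.2) ∧
      (projOff E r.1 ≠ 0 ∨ projOff E r.2 ≠ 0)

/-- A monomolecular network: every complex is either zero or a single species
with unit coefficient. -/
def Monomolecular [DecidableEq ι] (G : RN ι) : Prop :=
  ∀ y ∈ G.complexes, y = 0 ∨ ∃ i ∈ G.species, y = Pi.single i 1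

end RN

section AuxCat

variable {ι : Type} [DecidableEq ι]

lemma projOff_apply_of_not_mem {E : Finset ι} {i : ι} (hi : i ∉ E) (y : ι → ℝ) :
    projOff E y i = y i := if_neg hi

lemma projOff_apply_of_mem {E : Finset ι} {i : ι} (hi : i ∈ E) (y : ι → ℝ) :
    projOff E y i = 0 := if_pos hi

lemma sum_ne_mem_species (H : RN ι) {L : List ((ι → ℝ) × (ι → ℝ))}
    (hL : ∀ r ∈ L, r ∈ H.reactions) {i : ι}
    (h : (L.map (fun r => r.2 i - r.1 i)).sum ≠ 0) : i ∈ H.species := by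
  by_contra hi
  apply h
  apply List.sum_eq_zero
  intro x hx
  obtain ⟨r, hr, rfl⟩ := List.mem_map.1 hx
  have h1 : r.1 i = 0 := by
    by_contra h1
    exact hi (H.complexes_supp _ (H.react_mem_fst _ (hL r hr)) i h1)
  have h2 : r.2 i = 0 := by
    by_contra h2
    exact hi (H.complexes_supp _ (H.react_mem_snd _ (hL r hr)) i h2)
  simp [h1, h2]

lemma species_G'_spec {G G' : RN ι} {E : Finset ι}
    (hred : G.IsCatalystReduction E G') {i : ι}
    (hi : i ∈ G'.species) : i ∉ E ∧ i ∈ G.species := by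
  obtain ⟨y, hy, hyi⟩ := G'.species_used i hi
  obtain ⟨p, hp, hpy⟩ := G'.complexes_used y hy
  obtain ⟨r, hr, hpr, -⟩ := (hred p).1 hp
  have hiE : i ∉ E := by
    intro hiE
    rcases hpy with h | h
    · rw [← h, hpr] at hyi; exact hyi (projOff_apply_of_mem hiE _)
    · rw [← h, hpr] at hyi; exact hyi (projOff_apply_of_mem hiE _)
  refine ⟨hiE, ?_⟩
  rcases hpy with h | h
  · rw [← h, hpr] at hyi
    have hyi' : projOff E r.1 i ≠ 0 := hyi
    rw [projOff_apply_of_not_mem hiE] at hyi'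
    exact G.complexes_supp _ (G.react_mem_fst _ hr) i hyi'
  · rw [← h, hpr] at hyi
    have hyi' : projOff E r.2 i ≠ 0 := hyi
    rw [projOff_apply_of_not_mem hiE] at hyi'
    exact G.complexes_supp _ (G.react_mem_snd _ hr) i hyi'

lemma mem_species_G' {G G' : RN ι} {E : Finset ι}
    (hred : G.IsCatalystReduction E G') {i : ι}
    (hi : i ∈ G.species) (hiE : i ∉ E) : i ∈ G'.species := by
  obtain ⟨y, hy, hyi⟩ := G.species_used i hi
  obtain ⟨r, hr, hry⟩ := G.complexes_used y hy
  have key : ∀ z, z = y → projOff E z ≠ 0 := by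
    intro z hz h0
    have := congrFun h0 i
    rw [projOff_apply_of_not_mem hiE, hz] at this
    exact hyi this
  rcases hry with h | h
  · have hp : (projOff E r.1, projOff E r.2) ∈ G'.reactions :=
      (hred _).2 ⟨r, hr, rfl, Or.inl (key _ h)⟩
    have : projOff E r.1 i ≠ 0 := by
      rw [projOff_apply_of_not_mem hiE, h]; exact hyi
    exact G'.complexes_supp _ (G'.react_mem_fst _ hp) i this
  · have hp : (projOff E r.1, projOff E r.2) ∈ G'.reactions :=
      (hred _).2 ⟨r, hr, rfl, Or.inr (key _ h)⟩
    have : projOff E r.2 i ≠ 0 := by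
      rw [projOff_apply_of_not_mem hiE, h]; exact hyi
    exact G'.complexes_supp _ (G'.react_mem_snd _ hp) i this

lemma siphon_G_of_G' {G G' : RN ι} {E : Finset ι}
    (hred : G.IsCatalystReduction E G') {T : Set ι}
    (hT : G'.IsSiphon T) : G.IsSiphon T := by
  obtain ⟨hne, hsub, hsip⟩ := hT
  refine ⟨hne, fun i hi => (species_G'_spec hred (hsub hi)).2, ?_⟩
  rintro r hr ⟨i, hiT, hi2⟩
  have hiE : i ∉ E := (species_G'_spec hred (hsub hiT)).1
  have hne2 : projOff E r.2 ≠ 0 := by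
    intro h0
    have := congrFun h0 i
    rw [projOff_apply_of_not_mem hiE] at this
    exact ne_of_gt hi2 this
  have hp : (projOff E r.1, projOff E r.2) ∈ G'.reactions :=
    (hred _).2 ⟨r, hr, rfl, Or.inr hne2⟩
  obtain ⟨j, hjT, hj⟩ := hsip _ hp ⟨i, hiT, by
    show 0 < projOff E r.2 i
    rw [projOff_apply_of_not_mem hiE]; exact hi2⟩
  refine ⟨j, hjT, ?_⟩
  have hjE : j ∉ E := (species_G'_spec hred (hsub hjT)).1
  rw [show (projOff E r.1, projOff E r.2).1 j = r.1 j from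
    projOff_apply_of_not_mem hjE _] at hj
  exact hj

lemma siphon_G'_of_G {G G' : RN ι} {E : Finset ι}
    (hred : G.IsCatalystReduction E G') {T : Set ι}
    (hT : G.IsSiphon T) (hTE : ∀ i ∈ T, i ∉ E) : G'.IsSiphon T := by
  obtain ⟨hne, hsub, hsip⟩ := hT
  refine ⟨hne, fun i hi => mem_species_G' hred (hsub hi) (hTE i hi), ?_⟩
  rintro p hp ⟨i, hiT, hi2⟩
  obtain ⟨r, hr, hpr, -⟩ := (hred p).1 hp
  have hri : 0 < r.2 i := by
    rw [hpr] at hi2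
    rwa [show (projOff E r.1, projOff E r.2).2 i = r.2 i from
      projOff_apply_of_not_mem (hTE i hiT) _] at hi2
  obtain ⟨j, hjT, hj⟩ := hsip r hr ⟨i, hiT, hri⟩
  refine ⟨j, hjT, ?_⟩
  rw [hpr]
  show 0 < projOff E r.1 j
  rw [projOff_apply_of_not_mem (hTE j hjT)]
  exact hj

lemma lift_list {G G' : RN ι} {E : Finset ι}
    (hred : G.IsCatalystReduction E G') (L' : List ((ι → ℝ) × (ι → ℝ)))
    (hL' : ∀ p ∈ L', p ∈ G'.reactions) :
    ∃ L : List ((ι → ℝ) × (ι → ℝ)), (∀ r ∈ L, r ∈ G.reactions) ∧ ∀ i ∉ E,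
      (L.map (fun r => r.2 i - r.1 i)).sum = (L'.map (fun p => p.2 i - p.1 i)).sum := by
  induction L' with
  | nil => exact ⟨[], by simp, by simp⟩
  | cons p L' ih =>
    obtain ⟨L, hL, hs⟩ := ih (fun q hq => hL' q (List.mem_cons_of_mem _ hq))
    obtain ⟨r, hr, hpr, -⟩ := (hred p).1 (hL' p List.mem_cons_self)
    refine ⟨r :: L, ?_, ?_⟩
    · intro s hs'
      rcases List.mem_cons.1 hs' with h | h
      · exact h ▸ hr
      · exact hL s h
    · intro i hi
      simp only [List.map_cons, List.sum_cons, hs i hi]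
      congr 1
      rw [hpr]
      show r.2 i - r.1 i = projOff E r.2 i - projOff E r.1 i
      rw [projOff_apply_of_not_mem hi, projOff_apply_of_not_mem hi]

lemma proj_list {G G' : RN ι} {E : Finset ι}
    (hred : G.IsCatalystReduction E G') (L : List ((ι → ℝ) × (ι → ℝ)))
    (hL : ∀ r ∈ L, r ∈ G.reactions) :
    ∃ L' : List ((ι → ℝ) × (ι → ℝ)), (∀ p ∈ L', p ∈ G'.reactions) ∧ ∀ i ∉ E,
      (L'.map (fun p => p.2 i - p.1 i)).sum = (L.map (fun r => r.2 i - r.1 i)).sum := by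
  induction L with
  | nil => exact ⟨[], by simp, by simp⟩
  | cons r L ih =>
    obtain ⟨L', hL', hs⟩ := ih (fun s hs => hL s (List.mem_cons_of_mem _ hs))
    have hr : r ∈ G.reactions := hL r List.mem_cons_self
    by_cases h0 : projOff E r.1 = 0 ∧ projOff E r.2 = 0
    · refine ⟨L', hL', fun i hi => ?_⟩
      simp only [List.map_cons, List.sum_cons, hs i hi]
      have h1 : r.1 i = 0 := by
        have := congrFun h0.1 i; rwa [projOff_apply_of_not_mem hi] at this
      have h2 : r.2 i = 0 := by
        have := congrFun h0.2 i; rwa [projOff_apply_of_not_mem hi] at this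
      rw [h1, h2]; ring
    · have hp : (projOff E r.1, projOff E r.2) ∈ G'.reactions :=
        (hred _).2 ⟨r, hr, rfl, not_and_or.1 h0⟩
      refine ⟨(projOff E r.1, projOff E r.2) :: L', ?_, fun i hi => ?_⟩
      · intro q hq
        rcases List.mem_cons.1 hq with h | h
        · exact h ▸ hp
        · exact hL' q h
      · simp only [List.map_cons, List.sum_cons, hs i hi]
        congr 1
        show projOff E r.2 i - projOff E r.1 i = _
        rw [projOff_apply_of_not_mem hi, projOff_apply_of_not_mem hi]

lemma restrict_list {G GE : RN ι} {E : Finset ι}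
    (hC1 : ∀ r ∈ G.reactions,
      (∀ i ∈ E, r.1 i = r.2 i) ∨ (∀ i, i ∉ E → r.1 i = 0 ∧ r.2 i = 0))
    (hGE : ∀ p : (ι → ℝ) × (ι → ℝ), p ∈ GE.reactions ↔
      (p ∈ G.reactions ∧ (∀ i, p.1 i ≠ 0 → i ∈ E) ∧ (∀ i, p.2 i ≠ 0 → i ∈ E)))
    (L : List ((ι → ℝ) × (ι → ℝ))) (hL : ∀ r ∈ L, r ∈ G.reactions) :
    ∃ LE : List ((ι → ℝ) × (ι → ℝ)), (∀ p ∈ LE, p ∈ GE.reactions) ∧ ∀ i ∈ E,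
      (LE.map (fun p => p.2 i - p.1 i)).sum = (L.map (fun r => r.2 i - r.1 i)).sum := by
  induction L with
  | nil => exact ⟨[], by simp, by simp⟩
  | cons r L ih =>
    obtain ⟨LE, hLE, hs⟩ := ih (fun s hsm => hL s (List.mem_cons_of_mem _ hsm))
    have hr : r ∈ G.reactions := hL r List.mem_cons_self
    rcases hC1 r hr with ha | hb
    · refine ⟨LE, hLE, fun i hi => ?_⟩
      simp only [List.map_cons, List.sum_cons, hs i hi, ha i hi]
      ring
    · have hrGE : r ∈ GE.reactions := (hGE r).2
        ⟨hr, fun i h1 => by by_contra hiE; exact h1 (hb i hiE).1,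
             fun i h2 => by by_contra hiE; exact h2 (hb i hiE).2⟩
      refine ⟨r :: LE, ?_, fun i hi => ?_⟩
      · intro q hq
        rcases List.mem_cons.1 hq with h | h
        · exact h ▸ hrGE
        · exact hLE q h
      · simp only [List.map_cons, List.sum_cons, hs i hi]

/-- A sign-generic version of drainable/self-replicable. -/
def GenFlow (H : RN ι) (P : ℝ → Prop) (T : Set ι) : Prop :=
  T.Nonempty ∧ T ⊆ ↑H.species ∧
    ∃ L : List ((ι → ℝ) × (ι → ℝ)), (∀ r ∈ L, r ∈ H.reactions) ∧
      ∀ i ∈ T, P ((L.map (fun r => r.2 i - r.1 i)).sum)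

lemma gen_iff {G G' GE : RN ι} {E : Finset ι}
    (hcat : G.IsCatalystSet GE E) (hred : G.IsCatalystReduction E G')
    (P : ℝ → Prop) (hP0 : ¬ P 0)
    (hGE2 : ∀ T : Set ι, GE.IsSiphon T → ¬ GenFlow GE P T) :
    (∀ T : Set ι, G.IsSiphon T → ¬ GenFlow G P T) ↔
      (∀ T : Set ι, G'.IsSiphon T → ¬ GenFlow G' P T) := by
  obtain ⟨-, -, hC1, hGE, -⟩ := hcat
  constructor
  · rintro hG T' hT' ⟨hne, hsub, L', hL', hdr⟩
    refine hG T' (siphon_G_of_G' hred hT') ?_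
    obtain ⟨L, hL, hs⟩ := lift_list hred L' hL'
    refine ⟨hne, fun i hi => (species_G'_spec hred (hsub hi)).2, L, hL, fun i hi => ?_⟩
    rw [hs i (species_G'_spec hred (hsub hi)).1]
    exact hdr i hi
  · rintro hG' T hT ⟨hne, hsub, L, hL, hdr⟩
    by_cases hTE : ∃ i ∈ T, i ∈ E
    · -- T ∩ E is a GE-siphon with the given flow property: contradiction
      obtain ⟨LE, hLE, hs⟩ := restrict_list hC1 hGE L hL
      obtain ⟨i0, hi0T, hi0E⟩ := hTE
      have hsumE : ∀ i ∈ T, i ∈ E → P ((LE.map (fun p => p.2 i - p.1 i)).sum) := by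
        intro i hiT hiE
        rw [hs i hiE]
        exact hdr i hiT
      have hspec : ∀ i ∈ T, i ∈ E → i ∈ GE.species := by
        intro i hiT hiE
        refine sum_ne_mem_species GE hLE (fun h => hP0 ?_)
        have := hsumE i hiT hiE
        rwa [h] at this
      refine hGE2 (T ∩ ↑E) ⟨⟨i0, hi0T, hi0E⟩, ?_, ?_⟩ ?_
      · rintro i ⟨hiT, hiE⟩
        exact hspec i hiT hiE
      · rintro p hp ⟨i, ⟨hiT, hiE⟩, hi2⟩
        obtain ⟨hpG, hp1, -⟩ := (hGE p).1 hp
        obtain ⟨j, hjT, hj⟩ := hT.2.2 p hpG ⟨i, hiT, hi2⟩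
        exact ⟨j, ⟨hjT, hp1 j (ne_of_gt hj)⟩, hj⟩
      · refine ⟨⟨i0, hi0T, hi0E⟩, ?_, LE, hLE, ?_⟩
        · rintro i ⟨hiT, hiE⟩
          exact hspec i hiT hiE
        · rintro i ⟨hiT, hiE⟩
          exact hsumE i hiT hiE
    · push_neg at hTE
      have hTE' : ∀ i ∈ T, i ∉ E := hTE
      refine hG' T (siphon_G'_of_G hred hT hTE') ?_
      obtain ⟨L', hL', hs⟩ := proj_list hred L hL
      refine ⟨hne, fun i hi => mem_species_G' hred (hsub hi) (hTE' i hi), L', hL',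
        fun i hi => ?_⟩
      rw [hs i (hTE' i hi)]
      exact hdr i hi

end AuxCat

/-- Theorem 2(i): if `G'` is obtained from `G` by removal of a set of
catalysts `E` (with implied subnetwork `GE`), then `G` has no drainable
(respectively, self-replicable) siphons if and only if `G'` has no drainable
(respectively, self-replicable) siphons. -/
theorem no_drainable_selfReplicable_siphons_iff_of_catalyst_removal
    {ι : Type} [DecidableEq ι] (G G' GE : RN ι) (E : Finset ι)
    (hcat : G.IsCatalystSet GE E) (hred : G.IsCatalystReduction E G') :
    ((∀ T : Set ι, G.IsSiphon T → ¬ G.Drainable T) ↔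
      (∀ T : Set ι, G'.IsSiphon T → ¬ G'.Drainable T)) ∧
    ((∀ T : Set ι, G.IsSiphon T → ¬ G.SelfReplicable T) ↔
      (∀ T : Set ι, G'.IsSiphon T → ¬ G'.SelfReplicable T)) := by
  refine ⟨?_, ?_⟩
  · exact gen_iff hcat hred (fun x => x < 0) (lt_irrefl 0)
      (fun T hT => (hcat.2.2.2.2 T hT).1)
  · exact gen_iff hcat hred (fun x => 0 < x) (lt_irrefl 0)
      (fun T hT => (hcat.2.2.2.2 T hT).2)
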